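/- arXiv:1907.13383 — 3 statements merged into one kernel-verified Lean document; each statement's English description precedes it below -/
import Mathlib

section
/- Let R be a commutative ring in which e is a unit, and let f = X^{en} + a_{en-1}X^{en-1} + ... + a_0 be a monic polynomial of degree en over R. If f = g^e for a monic polynomial g = X^n + b_{n-1}X^{n-1} + ... + b_0 of degree n, then the coefficients b_{n-1}, ..., b_0 of g are uniquely determined by the top coefficients a_{en-1}, ..., a_{(e-1)n} of f. -/
open Polynomial

/-- In a commutative ring where `e` is a unit, a monic `e`-th root of a monic polynomial
of degree `e*n` is uniquely determined (in particular by the top coefficients of `f`):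
any two monic degree-`n` polynomials with `g₁^e = g₂^e = f` coincide. -/
theorem stmt2 (R : Type) [CommRing R] (e n : ℕ)
    (he : IsUnit (e : R))
    (f : Polynomial R) (hf : f.Monic) (hdeg : f.natDegree = e * n)
    (g₁ g₂ : Polynomial R) (hg₁ : g₁.Monic) (hg₂ : g₂.Monic)
    (hd₁ : g₁.natDegree = n) (hd₂ : g₂.natDegree = n)
    (h₁ : g₁ ^ e = f) (h₂ : g₂ ^ e = f) :
    g₁ = g₂ := by
  nontriviality R
  set S : Polynomial R := ∑ i ∈ Finset.range e, g₁ ^ i * g₂ ^ (e - 1 - i) with hS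
  have hterm : ∀ i ∈ Finset.range e,
      (g₁ ^ i * g₂ ^ (e - 1 - i)).Monic ∧
      (g₁ ^ i * g₂ ^ (e - 1 - i)).natDegree = (e - 1) * n := by
    intro i hi
    have hi' := Finset.mem_range.mp hi
    have hm : (g₁ ^ i * g₂ ^ (e - 1 - i)).Monic := (hg₁.pow i).mul (hg₂.pow _)
    refine ⟨hm, ?_⟩
    rw [(hg₁.pow i).natDegree_mul (hg₂.pow _), hg₁.natDegree_pow, hg₂.natDegree_pow, hd₁, hd₂]
    have : i * n + (e - 1 - i) * n = (e - 1) * n := by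
      rw [← add_mul]; congr 1; omega
    exact this
  have hcoeff : S.coeff ((e - 1) * n) = (e : R) := by
    rw [hS, finset_sum_coeff, Finset.sum_congr rfl (fun i hi =>
      show (g₁ ^ i * g₂ ^ (e - 1 - i)).coeff ((e - 1) * n) = 1 by
        rw [← (hterm i hi).2]; exact (hterm i hi).1.coeff_natDegree)]
    simp
  have hdegS : S.natDegree ≤ (e - 1) * n := by
    refine natDegree_sum_le_of_forall_le _ _ fun i hi => ?_
    exact le_of_eq (hterm i hi).2
  have hne : (e : R) ≠ 0 := fun h0 => by
    simp [h0] at he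
  have hndS : S.natDegree = (e - 1) * n := by
    refine le_antisymm hdegS (le_natDegree_of_ne_zero ?_)
    rw [hcoeff]; exact hne
  have hlead : IsUnit S.leadingCoeff := by
    rw [leadingCoeff, hndS, hcoeff]; exact he
  have key : S * (g₁ - g₂) = 0 := by
    rw [hS, geom_sum₂_mul, h₁, h₂, sub_self]
  have := (isUnit_leadingCoeff_mul_right_eq_zero_iff hlead).mp key
  linear_combination this
end

section
/- Let ζ₃ be a primitive cube root of unity and a ∈ ℚ(ζ₃)^× a non-cube. If the extension K₂ = ℚ(ζ₃, ∛a)/ℚ is abelian of degree 6, then the norm N_{ℚ(ζ₃)/ℚ}(a) = a·σ(a) is a cube in ℚ, where σ is the nontrivial automorphism of ℚ(ζ₃). -/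
open Polynomial NumberField IntermediateField

/-- If `a ∈ ℚ(ζ₃)` is such that `X³ - a` is irreducible and `K₂ = ℚ(ζ₃, ∛a)` is an
abelian extension of `ℚ` of degree `6`, then the norm `N(a) = a·σ(a)` is a cube in `ℚ`,
where `σ` is the nontrivial automorphism of `ℚ(ζ₃)`. -/
theorem stmt16 (K₂ : Type) [Field K₂] [NumberField K₂]
    (ζ α : K₂) (hζ : IsPrimitiveRoot ζ 3)
    (F : IntermediateField ℚ K₂) (hF : F = IntermediateField.adjoin ℚ {ζ})
    (a : F) (ha0 : a ≠ 0)
    (hirr : Irreducible (Polynomial.X ^ 3 - Polynomial.C a : Polynomial F))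
    (hα : α ^ 3 = algebraMap F K₂ a)
    (hgen : IntermediateField.adjoin ℚ ({ζ, α} : Set K₂) = ⊤)
    (hdeg : Module.finrank ℚ K₂ = 6)
    (hGal : IsGalois ℚ K₂)
    (hab : ∀ g h : K₂ ≃ₐ[ℚ] K₂, g * h = h * g)
    (σ : F ≃ₐ[ℚ] F) (hσ : σ ≠ AlgEquiv.refl) :
    ∃ c : ℚ, (algebraMap ℚ F) c ^ 3 = (a : F) * σ a := by
  classical
  have hinj : Function.Injective (algebraMap F K₂) := (algebraMap F K₂).injective
  -- basic facts about ζ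
  have hζ3 : ζ ^ 3 = 1 := hζ.pow_eq_one
  have hζ1 : ζ ≠ 1 := hζ.ne_one (by norm_num)
  have relζ : ζ ^ 2 + ζ + 1 = 0 := by
    have h : (ζ - 1) * (ζ ^ 2 + ζ + 1) = 0 := by linear_combination hζ3
    rcases mul_eq_zero.mp h with h' | h'
    · exact absurd (sub_eq_zero.mp h') hζ1
    · exact h'
  -- ζ as an element of F
  have hζF : ζ ∈ F := hF ▸ subset_adjoin ℚ {ζ} rfl
  set ζF : F := ⟨ζ, hζF⟩ with hζFdef
  have hζFc : algebraMap F K₂ ζF = ζ := rfl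
  have relF : ζF ^ 2 + ζF + 1 = 0 := by
    apply hinj
    rw [map_add, map_add, map_pow, map_one, map_zero, hζFc]
    exact relζ
  -- an automorphism of K₂ fixing ζ fixes F pointwise
  have hfix : ∀ g : K₂ ≃ₐ[ℚ] K₂, g ζ = ζ →
      ∀ x : F, g (algebraMap F K₂ x) = algebraMap F K₂ x := by
    intro g hg x
    have hx : (x : K₂) ∈ adjoin ℚ ({ζ} : Set K₂) := hF ▸ x.2
    refine IntermediateField.adjoin_induction (F := ℚ) (E := K₂) (s := ({ζ} : Set K₂))
      (p := fun y _ => g y = y) ?_ ?_ ?_ ?_ ?_ hx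
    · intro y hy; rw [Set.mem_singleton_iff.mp hy]; exact hg
    · intro q; exact g.commutes q
    · intro y z _ _ hy hz; rw [map_add, hy, hz]
    · intro y _ hy; rw [map_inv₀, hy]
    · intro y z _ _ hy hz; rw [map_mul, hy, hz]
  -- σ ζF is a root of X² + X + 1
  have relσ : (σ ζF) ^ 2 + σ ζF + 1 = 0 := by
    have h := congrArg σ relF
    simpa using h
  have hcases : σ ζF = ζF ∨ σ ζF = -1 - ζF := by
    have h : (σ ζF - ζF) * (σ ζF - (-1 - ζF)) = 0 := by linear_combination relσ - relF
    rcases mul_eq_zero.mp h with h' | h'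
    · exact Or.inl (sub_eq_zero.mp h')
    · exact Or.inr (sub_eq_zero.mp h')
  have hσζ2 : σ (σ ζF) = ζF := by
    rcases hcases with h | h
    · rw [h, h]
    · rw [h, map_sub, map_neg, map_one, h]; ring
  -- lift σ to K₂
  haveI : Normal ℚ K₂ := hGal.to_normal
  set τ₀ : K₂ ≃ₐ[ℚ] K₂ := σ.liftNormal K₂ with hτ₀def
  have hτ₀ : ∀ x : F, τ₀ (algebraMap F K₂ x) = algebraMap F K₂ (σ x) :=
    fun x => AlgEquiv.liftNormal_commutes σ K₂ x
  -- σ ∘ σ = id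
  have hτ₀2ζ : (τ₀ * τ₀) ζ = ζ := by
    have h : τ₀ (τ₀ ζ) = algebraMap F K₂ (σ (σ ζF)) := by
      rw [← hζFc, hτ₀, hτ₀]
    rw [AlgEquiv.mul_apply, h, hσζ2, hζFc]
  have hσσ : ∀ x : F, σ (σ x) = x := by
    intro x
    apply hinj
    rw [← hτ₀, ← hτ₀]
    have := hfix (τ₀ * τ₀) hτ₀2ζ x
    rw [AlgEquiv.mul_apply] at this
    exact this
  -- τ := τ₀ ^ 3 is an involution extending σ
  set τ : K₂ ≃ₐ[ℚ] K₂ := τ₀ ^ 3 with hτdef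
  have hτ : ∀ x : F, τ (algebraMap F K₂ x) = algebraMap F K₂ (σ x) := by
    intro x
    have : τ (algebraMap F K₂ x) = τ₀ (τ₀ (τ₀ (algebraMap F K₂ x))) := by
      rw [hτdef]
      simp [pow_succ, AlgEquiv.mul_apply]
    rw [this, hτ₀, hτ₀, hτ₀, hσσ]
  have hcard : Fintype.card (K₂ ≃ₐ[ℚ] K₂) = 6 := by
    rw [← Nat.card_eq_fintype_card, IsGalois.card_aut_eq_finrank, hdeg]
  have hτ₀6 : τ₀ ^ 6 = 1 := by
    rw [← hcard]; exact pow_card_eq_one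
  have hττ : ∀ y : K₂, τ (τ y) = y := by
    intro y
    have h : τ * τ = 1 := by
      rw [hτdef, ← pow_add]
      exact hτ₀6
    rw [← AlgEquiv.mul_apply, h, AlgEquiv.one_apply]
  -- σ ζF = -1 - ζF, so τ ζ = ζ²
  have hσζ : σ ζF = -1 - ζF := by
    rcases hcases with h | h
    · exfalso
      apply hσ
      apply AlgEquiv.ext
      intro x
      apply hinj
      have hτζ1 : τ ζ = ζ := by
        rw [← hζFc, hτ, h, hζFc]
      have := hfix τ hτζ1 x
      rw [hτ] at this
      exact this
    · exact h
  have hτζ : τ ζ = ζ ^ 2 := by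
    rw [← hζFc, hτ, hσζ, map_sub, map_neg, map_one, hζFc]
    linear_combination -relζ
  -- roots of unity
  have hcube : ∀ ω : K₂, ω ^ 3 = 1 → ω = 1 ∨ ω = ζ ∨ ω = ζ ^ 2 := by
    intro ω hω
    have h : (ω - 1) * ((ω - ζ) * (ω - ζ ^ 2)) = 0 := by
      linear_combination hω + (ω - ω ^ 2) * relζ + (ω - 1) * hζ3
    rcases mul_eq_zero.mp h with h' | h'
    · exact Or.inl (sub_eq_zero.mp h')
    · rcases mul_eq_zero.mp h' with h'' | h''
      · exact Or.inr (Or.inl (sub_eq_zero.mp h''))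
      · exact Or.inr (Or.inr (sub_eq_zero.mp h''))
  have hτinv : ∀ ω : K₂, ω ^ 3 = 1 → τ ω * ω = 1 := by
    intro ω hω
    rcases hcube ω hω with h | h | h <;> subst h
    · simp
    · rw [hτζ]; linear_combination hζ3
    · rw [map_pow, hτζ]; linear_combination (ζ ^ 3 + 1) * hζ3
  have hα0 : α ≠ 0 := by
    intro h
    apply ha0
    apply hinj
    rw [← hα, h, map_zero]
    ring
  set β : K₂ := α * τ α with hβ
  -- any automorphism fixing F pointwise fixes β
  have case1 : ∀ g : K₂ ≃ₐ[ℚ] K₂,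
      (∀ x : F, g (algebraMap F K₂ x) = algebraMap F K₂ x) → g β = β := by
    intro g hg
    have h3 : (g α) ^ 3 = α ^ 3 := by rw [← map_pow, hα, hg a]
    set ω : K₂ := g α * α⁻¹ with hω
    have hω3 : ω ^ 3 = 1 := by
      rw [hω, mul_pow, h3, inv_pow, mul_inv_cancel₀ (pow_ne_zero _ hα0)]
    have hgα : g α = ω * α := by
      rw [hω, inv_mul_cancel_right₀ hα0]
    have hcomm : ∀ y : K₂, g (τ y) = τ (g y) := by
      intro y
      rw [← AlgEquiv.mul_apply, hab, AlgEquiv.mul_apply]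
    calc g β = g α * τ (g α) := by rw [hβ, map_mul, hcomm]
      _ = (ω * α) * (τ ω * τ α) := by rw [hgα, map_mul]
      _ = (τ ω * ω) * (α * τ α) := by ring
      _ = β := by rw [hτinv ω hω3, one_mul, hβ]
  have hτβ : τ β = β := by
    rw [hβ, map_mul, hττ]; ring
  -- β is fixed by every automorphism
  have key : ∀ g : K₂ ≃ₐ[ℚ] K₂, g β = β := by
    intro g
    have hgζroot : (g ζ) ^ 2 + g ζ + 1 = 0 := by
      have h := congrArg g relζ
      simpa using h
    have hgζ : g ζ = ζ ∨ g ζ = ζ ^ 2 := by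
      have h : (g ζ - ζ) * (g ζ - ζ ^ 2) = 0 := by
        linear_combination hgζroot - (g ζ) * relζ + hζ3
      rcases mul_eq_zero.mp h with h' | h'
      · exact Or.inl (sub_eq_zero.mp h')
      · exact Or.inr (sub_eq_zero.mp h')
    rcases hgζ with h | h
    · exact case1 g (hfix g h)
    · have hh : (τ * g) ζ = ζ := by
        rw [AlgEquiv.mul_apply, h, map_pow, hτζ]
        linear_combination ζ * hζ3
      have h1 := case1 (τ * g) (hfix _ hh)
      rw [AlgEquiv.mul_apply] at h1
      have h2 := congrArg τ h1
      rw [hττ] at h2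
      rw [h2, hτβ]
  -- hence β ∈ ℚ
  have hβbot : β ∈ (⊥ : IntermediateField ℚ K₂) := by
    have h1 : IntermediateField.fixedField (⊤ : Subgroup (K₂ ≃ₐ[ℚ] K₂)) = ⊥ := by
      rw [← IntermediateField.fixingSubgroup_bot]
      exact IsGalois.fixedField_fixingSubgroup ⊥
    rw [← h1]
    exact fun g => key g.1
  rw [IntermediateField.mem_bot] at hβbot
  obtain ⟨c, hc⟩ := hβbot
  refine ⟨c, ?_⟩
  apply hinj
  rw [map_mul, map_pow, ← IsScalarTower.algebraMap_apply ℚ F K₂, hc, hβ, mul_pow, hα,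
    ← map_pow, hα, hτ a]
end

section
/- Let a ∈ ℚ(ζ₃)^× with K₂ = ℚ(ζ₃, ∛a)/ℚ abelian of degree 6 and N(a) = a·σ(a) a rational cube with rational cube root c = ∛(N(a)) ∈ ℚ. Let α = ∛a ∈ K₂ and g = (α/c)²·σ(a). Then the element α + g is fixed by the unique automorphism of order 2 of K₂ and generates the unique cyclic cubic subfield of K₂ over ℚ. -/
open Polynomial NumberField IntermediateField

-- auxiliary: in a field, a cube root of unity is 1, ζ, or ζ² when ζ is a primitive cube root
lemma cube_root_trichotomy {K : Type} [Field K] {ζ u : K}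
    (h3 : ζ ^ 3 = 1) (hsum : ζ ^ 2 + ζ + 1 = 0) (hu : u ^ 3 = 1) :
    u = 1 ∨ u = ζ ∨ u = ζ ^ 2 := by
  have key : (u - 1) * ((u - ζ) * (u - ζ ^ 2)) = 0 := by
    have : (u - 1) * ((u - ζ) * (u - ζ ^ 2)) =
        u ^ 3 - 1 - (ζ ^ 2 + ζ + 1) * u ^ 2 + (ζ ^ 2 + ζ + ζ ^ 3) * u - (ζ ^ 3 - 1) := by
      ring
    rw [this, h3, hu, hsum]
    ring
  rcases mul_eq_zero.1 key with h | h
  · left; exact sub_eq_zero.1 h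
  · rcases mul_eq_zero.1 h with h' | h'
    · right; left; exact sub_eq_zero.1 h'
    · right; right; exact sub_eq_zero.1 h'

set_option maxHeartbeats 1000000 in
set_option synthInstance.maxHeartbeats 400000 in
/-- In the setting `K₂ = ℚ(ζ₃, ∛a)` abelian of degree 6 over `ℚ`, with `c = ∛(a·σ(a)) ∈ ℚ`
and `τ` the order-2 automorphism of `K₂` extending `σ`, set
`g = (α/c)²·σ(a)` where `α = ∛a`. Then `τ(α) = g`, the element `α + g` is fixed by `τ`,
and it generates the cyclic cubic subfield of `K₂`. -/
theorem stmt17 (K₂ : Type) [Field K₂] [NumberField K₂]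
    (ζ α : K₂) (hζ : IsPrimitiveRoot ζ 3)
    (F : IntermediateField ℚ K₂) (hF : F = IntermediateField.adjoin ℚ {ζ})
    (a : F) (ha0 : a ≠ 0)
    (hirr : Irreducible (Polynomial.X ^ 3 - Polynomial.C a : Polynomial F))
    (hα : α ^ 3 = algebraMap F K₂ a)
    (hgen : IntermediateField.adjoin ℚ ({ζ, α} : Set K₂) = ⊤)
    (hdeg : Module.finrank ℚ K₂ = 6)
    (hGal : IsGalois ℚ K₂)
    (hab : ∀ g h : K₂ ≃ₐ[ℚ] K₂, g * h = h * g)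
    (σ : F ≃ₐ[ℚ] F) (hσ : σ ≠ AlgEquiv.refl)
    (c : ℚ) (hc : (algebraMap ℚ F) c ^ 3 = a * σ a)
    (τ : K₂ ≃ₐ[ℚ] K₂) (hτ : orderOf τ = 2)
    (hτσ : ∀ z : F, τ (algebraMap F K₂ z) = algebraMap F K₂ (σ z)) :
    τ α = (α / algebraMap ℚ K₂ c) ^ 2 * algebraMap F K₂ (σ a) ∧
    τ (α + (α / algebraMap ℚ K₂ c) ^ 2 * algebraMap F K₂ (σ a)) =
      α + (α / algebraMap ℚ K₂ c) ^ 2 * algebraMap F K₂ (σ a) ∧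
    Module.finrank ℚ
      (IntermediateField.adjoin ℚ
        ({α + (α / algebraMap ℚ K₂ c) ^ 2 * algebraMap F K₂ (σ a)} : Set K₂)) = 3 := by
  classical
  have hembinj : Function.Injective (algebraMap F K₂) := (algebraMap F K₂).injective
  have hQinj : Function.Injective (algebraMap ℚ K₂) := (algebraMap ℚ K₂).injective
  have hQFinj : Function.Injective (algebraMap ℚ F) := (algebraMap ℚ F).injective
  have htower : ∀ q : ℚ, algebraMap ℚ K₂ q = algebraMap F K₂ (algebraMap ℚ F q) :=
    fun q => IsScalarTower.algebraMap_apply ℚ F K₂ q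
  -- τ is an involution
  have hτ2 : ∀ x : K₂, τ (τ x) = x := by
    intro x
    have h := pow_orderOf_eq_one τ
    rw [hτ] at h
    have : (τ ^ 2) x = x := by rw [h]; rfl
    rwa [sq, AlgEquiv.mul_apply] at this
  -- σ is an involution
  have hσ2 : ∀ w : F, σ (σ w) = w := by
    intro w
    apply hembinj
    rw [← hτσ, ← hτσ, hτ2]
  -- nonvanishing
  have hσa0 : σ a ≠ 0 := fun h => ha0 (by simpa using congrArg σ.symm h)
  have hA0 : algebraMap F K₂ a ≠ 0 := fun h => ha0 (hembinj (by simpa using h))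
  have hS0 : algebraMap F K₂ (σ a) ≠ 0 := fun h => hσa0 (hembinj (by simpa using h))
  have hα0 : α ≠ 0 := fun h => hA0 (by rw [← hα, h]; ring)
  have hcF0 : algebraMap ℚ F c ≠ 0 := by
    intro h
    apply mul_ne_zero ha0 hσa0
    rw [← hc, h]; ring
  have hCq0 : algebraMap ℚ K₂ c ≠ 0 := by
    rw [htower]
    exact fun h => hcF0 (hembinj (by simpa using h))
  -- roots of unity facts
  have hζ3 : ζ ^ 3 = 1 := hζ.pow_eq_one
  have hζ1 : ζ ≠ 1 := hζ.ne_one (by norm_num)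
  have hζ0 : ζ ≠ 0 := by
    intro h
    rw [h] at hζ3
    simp at hζ3
  have hζsum : ζ ^ 2 + ζ + 1 = 0 := by
    have hfac : (ζ - 1) * (ζ ^ 2 + ζ + 1) = 0 := by linear_combination hζ3
    rcases mul_eq_zero.1 hfac with h | h
    · exact absurd (sub_eq_zero.1 h) hζ1
    · exact h
  -- ζ lives in F
  have hζF : ζ ∈ F := by
    rw [hF]; exact IntermediateField.subset_adjoin ℚ {ζ} rfl
  set z : F := ⟨ζ, hζF⟩ with hzdef
  have hz : algebraMap F K₂ z = ζ := rfl
  have hz3 : z ^ 3 = 1 := by apply hembinj; rw [map_pow, hz, hζ3, map_one]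
  have hz1 : z ≠ 1 := fun h => hζ1 (by rw [← hz, h, map_one])
  have hzsum : z ^ 2 + z + 1 = 0 := by
    apply hembinj
    rw [map_add, map_add, map_pow, map_one, map_zero, hz, hζsum]
  -- ζ is not rational
  have hζnotQ : ζ ∉ (algebraMap ℚ K₂).range := by
    rintro ⟨q, hq⟩
    have hq3 : q ^ 3 = 1 := by
      apply hQinj
      rw [map_pow, hq, hζ3, map_one]
    have : q = 1 := by nlinarith [sq_nonneg (q - 1), sq_nonneg (q + 1), sq_nonneg q]
    exact hζ1 (by rw [← hq, this, map_one])
  -- minpoly of ζ has degree 2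
  have hζint : IsIntegral ℚ ζ := IsIntegral.of_finite ℚ ζ
  have hd2 : (minpoly ℚ ζ).natDegree = 2 := by
    have hdvd : minpoly ℚ ζ ∣ (X ^ 2 + X + 1 : ℚ[X]) := by
      apply minpoly.dvd
      simp only [map_add, map_pow, aeval_X, aeval_one]
      exact hζsum
    have hPne : (X ^ 2 + X + 1 : ℚ[X]) ≠ 0 := by
      intro h
      have := congrArg (fun p => Polynomial.coeff p 2) h
      simp [Polynomial.coeff_X, Polynomial.coeff_one] at this
    have hle : (minpoly ℚ ζ).natDegree ≤ 2 := by
      have := Polynomial.natDegree_le_of_dvd hdvd hPne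
      have h2 : (X ^ 2 + X + 1 : ℚ[X]).natDegree = 2 := by compute_degree!
      omega
    have hpos : 0 < (minpoly ℚ ζ).natDegree := minpoly.natDegree_pos hζint
    have hne1 : (minpoly ℚ ζ).natDegree ≠ 1 := by
      intro h
      exact hζnotQ (minpoly.natDegree_eq_one_iff.1 h)
    omega
  -- F has degree 2 over ℚ
  have hFrank : Module.finrank ℚ F = 2 := by
    rw [hF]
    rw [show IntermediateField.adjoin ℚ {ζ} = ℚ⟮ζ⟯ from rfl,
      IntermediateField.adjoin.finrank hζint, hd2]
  -- z generates F
  have hzint : IsIntegral ℚ z := IsIntegral.of_finite ℚ z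
  have hzmin : minpoly ℚ z = minpoly ℚ ζ := by
    rw [← hz, minpoly.algebraMap_eq hembinj]
  have hztop : IntermediateField.adjoin ℚ {z} = (⊤ : IntermediateField ℚ F) := by
    apply IntermediateField.eq_of_le_of_finrank_eq le_top
    rw [show IntermediateField.adjoin ℚ {z} = ℚ⟮z⟯ from rfl,
      IntermediateField.adjoin.finrank hzint, hzmin, hd2,
      IntermediateField.finrank_top', hFrank]
  -- σ z = z ^ 2
  have hσz : σ z = z ^ 2 := by
    have hσz3 : σ z ^ 3 = 1 := by rw [← map_pow, hz3, map_one]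
    rcases cube_root_trichotomy hz3 hzsum hσz3 with h | h | h
    · exfalso
      apply hz1
      have := congrArg σ h
      rw [hσ2, map_one] at this
      exact this
    · exfalso
      apply hσ
      have hfix : ∀ x : F, σ x = x := by
        have hEinv : ∀ x ∈ (AlgHom.equalizer (σ : F →ₐ[ℚ] F) (AlgHom.id ℚ F)).carrier,
            x⁻¹ ∈ (AlgHom.equalizer (σ : F →ₐ[ℚ] F) (AlgHom.id ℚ F)).carrier := by
          intro x hx
          have hx' : σ x = x := hx
          show σ x⁻¹ = x⁻¹
          rw [map_inv₀, hx']
        set E : IntermediateField ℚ F :=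
          { toSubalgebra := AlgHom.equalizer (σ : F →ₐ[ℚ] F) (AlgHom.id ℚ F)
            inv_mem' := hEinv } with hEdef
        have hle : IntermediateField.adjoin ℚ {z} ≤ E := by
          rw [IntermediateField.adjoin_le_iff]
          intro x hx
          rw [Set.mem_singleton_iff] at hx
          subst hx
          exact h
        rw [hztop] at hle
        intro x
        exact hle (IntermediateField.mem_top (x := x))
      exact AlgEquiv.ext hfix
    · exact h
  have hτζ : τ ζ = ζ ^ 2 := by
    rw [← hz, hτσ, hσz, map_pow, hz]
  set A := algebraMap F K₂ a with hAdef
  set S := algebraMap F K₂ (σ a) with hSdef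
  set Cq := algebraMap ℚ K₂ c with hCqdef
  set g : K₂ := (α / Cq) ^ 2 * S with hgdef
  have hC3 : Cq ^ 3 = A * S := by
    rw [hCqdef, htower c, ← map_pow, hc, map_mul]
  have hgalt : g = α ^ 2 * S / Cq ^ 2 := by
    rw [hgdef]; field_simp
  have hg3 : g ^ 3 = S := by
    have h1 : g ^ 3 * Cq ^ 6 = α ^ 6 * S ^ 3 := by
      rw [hgalt]; field_simp
    have h2 : α ^ 6 * S ^ 3 = S * Cq ^ 6 := by
      have : α ^ 6 = A ^ 2 := by rw [← hα]; ring
      rw [this, show Cq ^ 6 = (Cq ^ 3) ^ 2 by ring, hC3]; ring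
    have h3 : g ^ 3 * Cq ^ 6 = S * Cq ^ 6 := by rw [h1, h2]
    exact mul_right_cancel₀ (pow_ne_zero 6 hCq0) h3
  have hg0 : g ≠ 0 := by
    intro h
    apply hS0
    rw [← hg3, h]; ring
  have hτα3 : τ α ^ 3 = S := by
    rw [← map_pow, hα, hτσ a]
  set u : K₂ := τ α / g with hudef
  have hταu : τ α = u * g := by
    rw [hudef, div_mul_cancel₀ _ hg0]
  have hu3 : u ^ 3 = 1 := by
    rw [hudef, div_pow, hτα3, hg3, div_self hS0]
  have hτCq : τ Cq = Cq := τ.commutes c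
  have hτS : τ S = A := by rw [hSdef, hτσ, hσ2]
  have hτg : τ g = (τ α) ^ 2 * A / Cq ^ 2 := by
    rw [hgalt, map_div₀, map_mul, map_pow, map_pow, hτCq, hτS]
  have hgA : g ^ 2 * A / Cq ^ 2 = α := by
    have h1 : g ^ 2 * A * Cq ^ 4 = α * Cq ^ 2 * Cq ^ 4 := by
      have e1 : (g * Cq ^ 2) ^ 2 = (α ^ 2 * S) ^ 2 := by
        rw [hgalt, div_mul_cancel₀ _ (pow_ne_zero 2 hCq0)]
      have e2 : α * Cq ^ 6 = α ^ 4 * S ^ 2 * A := by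
        rw [show Cq ^ 6 = (Cq ^ 3) ^ 2 by ring, hC3,
          show α ^ 4 * S ^ 2 * A = α * (α ^ 3) * S ^ 2 * A by ring, hα]
        ring
      calc g ^ 2 * A * Cq ^ 4 = (g * Cq ^ 2) ^ 2 * A := by ring
        _ = (α ^ 2 * S) ^ 2 * A := by rw [e1]
        _ = α ^ 4 * S ^ 2 * A := by ring
        _ = α * Cq ^ 6 := e2.symm
        _ = α * Cq ^ 2 * Cq ^ 4 := by ring
    have h2 := mul_right_cancel₀ (pow_ne_zero 4 hCq0) h1
    rw [div_eq_iff (pow_ne_zero 2 hCq0)]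
    exact h2
  have hfixu : τ u * u ^ 2 = 1 := by
    have h1 : α = τ u * u ^ 2 * α := by
      conv_lhs => rw [← hτ2 α, hταu, map_mul, hτg, hταu]
      rw [show (u * g) ^ 2 * A / Cq ^ 2 = u ^ 2 * (g ^ 2 * A / Cq ^ 2) by ring, hgA]
      ring
    have h2 : τ u * u ^ 2 * α = 1 * α := by rw [← h1, one_mul]
    exact mul_right_cancel₀ hα0 h2
  have hτu : τ u = u := by
    have h1 : u * (τ u * u ^ 2) = u * 1 := by rw [hfixu]
    have h2 : τ u * u ^ 3 = u := by
      calc τ u * u ^ 3 = u * (τ u * u ^ 2) := by ring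
        _ = u * 1 := h1
        _ = u := mul_one u
    rwa [hu3, mul_one] at h2
  -- conclude u = 1
  have hueq : u = 1 := by
    rcases cube_root_trichotomy hζ3 hζsum hu3 with h | h | h
    · exact h
    · exfalso
      rw [h, hτζ] at hτu
      have h2 : ζ * ζ = ζ * 1 := by
        rw [mul_one, ← sq]; exact hτu
      exact hζ1 (mul_left_cancel₀ hζ0 h2)
    · exfalso
      rw [h, map_pow, hτζ] at hτu
      have hζ4 : (ζ ^ 2) ^ 2 = ζ := by
        rw [show (ζ ^ 2) ^ 2 = ζ ^ 3 * ζ by ring, hζ3, one_mul]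
      rw [hζ4] at hτu
      have h2 : ζ * 1 = ζ * ζ := by
        rw [mul_one]
        calc ζ = ζ ^ 2 := hτu
          _ = ζ * ζ := sq ζ
      exact hζ1 (mul_left_cancel₀ hζ0 h2).symm
  have part1 : τ α = g := by rw [hταu, hueq, one_mul]
  have hτgα : τ g = α := by
    rw [hτg, part1, hgA]
  have part2 : τ (α + g) = α + g := by
    rw [map_add, part1, hτgα, add_comm]
  refine ⟨part1, part2, ?_⟩
  set β : K₂ := α + g with hβdef
  -- β is not rational
  have hβnotQ : β ∉ (algebraMap ℚ K₂).range := by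
    rintro ⟨q, hq⟩
    -- minpoly of α over F is X^3 - C a
    have hmon : (X ^ 3 - Polynomial.C a : Polynomial F).Monic :=
      Polynomial.monic_X_pow_sub_C a (by norm_num)
    have haev : Polynomial.aeval α (X ^ 3 - Polynomial.C a : Polynomial F) = 0 := by
      rw [map_sub, Polynomial.aeval_C, map_pow, Polynomial.aeval_X, hα]
      exact sub_self _
    have hminα : minpoly F α = X ^ 3 - Polynomial.C a :=
      (minpoly.eq_of_irreducible_of_monic hirr haev hmon).symm
    -- the quadratic polynomial
    set P : Polynomial F := Polynomial.C (σ a / (algebraMap ℚ F c) ^ 2) * X ^ 2 + X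
      - Polynomial.C (algebraMap ℚ F q) with hPdef
    have haevP : Polynomial.aeval α P = 0 := by
      rw [hPdef]
      rw [map_sub, map_add, map_mul, Polynomial.aeval_C, Polynomial.aeval_C,
        map_pow, Polynomial.aeval_X]
      have e1 : algebraMap F K₂ (σ a / (algebraMap ℚ F c) ^ 2) = S / Cq ^ 2 := by
        rw [map_div₀, map_pow, ← htower]
      have e2 : algebraMap F K₂ (algebraMap ℚ F q) = β := by
        rw [← htower, hq]
      rw [e1, e2, hβdef, hgalt]
      field_simp
      ring
    have hdvdP : minpoly F α ∣ P := minpoly.dvd F α haevP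
    have hPne : P ≠ 0 := by
      intro h
      have := congrArg (fun p => Polynomial.coeff p 1) h
      simp [hPdef, Polynomial.coeff_X, Polynomial.coeff_one] at this
    have hPle : P.natDegree ≤ 2 := by
      rw [hPdef]
      compute_degree
    have h3 : (minpoly F α).natDegree ≤ P.natDegree :=
      Polynomial.natDegree_le_of_dvd hdvdP hPne
    rw [hminα, Polynomial.natDegree_X_pow_sub_C] at h3
    omega
  -- the fixed field of τ
  set L : IntermediateField ℚ K₂ := IntermediateField.fixedField (Subgroup.zpowers τ)
    with hLdef
  have hβL : β ∈ L := by
    have hpow : ∀ k : ℤ, (τ ^ k) β = β := by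
      intro k
      have h2 : τ ^ (2 : ℤ) = 1 := by
        have := pow_orderOf_eq_one τ
        rw [hτ] at this
        rw [show ((2 : ℤ) = ((2 : ℕ) : ℤ)) from rfl, zpow_natCast, this]
      have hdecomp : τ ^ k = τ ^ (k % 2) := by
        conv_lhs => rw [← Int.emod_add_mul_ediv k 2]
        rw [zpow_add, zpow_mul, h2, one_zpow, mul_one]
      rcases Int.emod_two_eq k with h | h
      · rw [hdecomp, h, zpow_zero]; rfl
      · rw [hdecomp, h, zpow_one]; exact part2
    rintro ⟨f, ⟨k, rfl⟩⟩
    exact hpow k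
  have hLK : Module.finrank L K₂ = 2 := by
    rw [hLdef, IntermediateField.finrank_fixedField_eq_card, Nat.card_zpowers, hτ]
  have hLrank : Module.finrank ℚ L = 3 := by
    have htowerL : Module.finrank ℚ L * Module.finrank L K₂ = Module.finrank ℚ K₂ :=
      Module.finrank_mul_finrank ℚ L K₂
    rw [hLK, hdeg] at htowerL
    omega
  set βL : L := ⟨β, hβL⟩ with hβLdef
  have hβLint : IsIntegral ℚ βL := IsIntegral.of_finite ℚ βL
  have hβint : IsIntegral ℚ β := IsIntegral.of_finite ℚ β
  have hmin_eq : minpoly ℚ β = minpoly ℚ βL := by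
    have : algebraMap L K₂ βL = β := rfl
    rw [← this, minpoly.algebraMap_eq (algebraMap L K₂).injective]
  have hdvd3 : (minpoly ℚ β).natDegree ∣ 3 := by
    rw [hmin_eq, ← hLrank]
    exact minpoly.degree_dvd hβLint
  have hne1 : (minpoly ℚ β).natDegree ≠ 1 := by
    intro h
    exact hβnotQ (minpoly.natDegree_eq_one_iff.1 h)
  have hd3 : (minpoly ℚ β).natDegree = 3 := by
    have hpos : 0 < (minpoly ℚ β).natDegree := minpoly.natDegree_pos hβint
    rcases (Nat.dvd_prime Nat.prime_three).1 hdvd3 with h | h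
    · omega
    · exact h
  rw [show IntermediateField.adjoin ℚ {β} = ℚ⟮β⟯ from rfl,
    IntermediateField.adjoin.finrank hβint, hd3]
end
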